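/- Let S be a quaternionic-linear endomorphism of ℍ² (a 2-dimensional right quaternionic vector space) satisfying S² = -id. Then for every nonzero v ∈ ℍ², the quaternionic line spanned by v and the quaternionic line spanned by S(v) together span ℍ² or coincide; moreover there exists a nonzero vector w such that S(w) = w·i, i.e., the quaternionic line through w is an eigenline of S. -/

import Mathlib

/-- The quaternions. -/
abbrev H : Type := Quaternion ℝ

/-- `ℍ²`, the right quaternionic vector space of pairs of quaternions. -/
abbrev H2 : Type := Fin 2 → H

/-- Right scalar multiplication on `ℍ²`. -/
noncomputable def rsmul (v : H2) (q : H) : H2 := fun i => v i * q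

/-- A map `S : ℍ² → ℍ²` is right quaternionic linear. -/
def RightLinear (S : H2 → H2) : Prop :=
  (∀ v w : H2, S (v + w) = S v + S w) ∧ (∀ (v : H2) (q : H), S (rsmul v q) = rsmul (S v) q)

/-- The quaternionic line `v·ℍ` spanned by `v`. -/
def lineOf (v : H2) : Set H2 := {w | ∃ q : H, w = rsmul v q}

def qi : H := ⟨0, 1, 0, 0⟩
def qj : H := ⟨0, 0, 1, 0⟩

lemma qi_sq : qi * qi = -1 := by
  ext <;> simp [Quaternion.re_mul, Quaternion.imI_mul, Quaternion.imJ_mul,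
    Quaternion.imK_mul, Quaternion.re_one, Quaternion.imI_one, Quaternion.imJ_one, Quaternion.imK_one] <;> simp [qi]

lemma neg_qi_qi : (-qi) * qi = 1 := by rw [neg_mul, qi_sq, neg_neg]

lemma qi_neg_qi : qi * (-qi) = 1 := by rw [mul_neg, qi_sq, neg_neg]

lemma qj_ne_zero : qj ≠ 0 := by
  intro h
  have := congrArg QuaternionAlgebra.imJ h
  simp [qj] at this
  exact one_ne_zero this

lemma key_comm : (-qi) * qj = qj * qi := by
  ext <;> simp [Quaternion.re_mul, Quaternion.imI_mul, Quaternion.imJ_mul,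
    Quaternion.imK_mul] <;> simp [qi, qj]

lemma rsmul_rsmul (v : H2) (a b : H) : rsmul (rsmul v a) b = rsmul v (a * b) := by
  funext k; simp [rsmul, mul_assoc]

lemma rsmul_one (v : H2) : rsmul v 1 = v := by funext k; simp [rsmul]

lemma rsmul_ne_zero (v : H2) (hv : v ≠ 0) (a : H) (ha : a ≠ 0) : rsmul v a ≠ 0 := by
  intro h
  apply hv
  funext k
  have := congrFun h k
  simp only [rsmul, Pi.zero_apply] at this ⊢
  exact (mul_eq_zero.mp this).resolve_right ha

lemma tri (k0 k1 : Fin 2) (h : k0 ≠ k1) (k : Fin 2) : k = k0 ∨ k = k1 := by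
  fin_cases k <;> fin_cases k0 <;> fin_cases k1 <;> simp_all

lemma key_span (k0 k1 : Fin 2) (hk : k0 ≠ k1) (x y : H2) (hx0 : x k0 ≠ 0)
    (hy : ∀ q : H, y ≠ rsmul x q) (u : H2) : ∃ a b : H, u = rsmul x a + rsmul y b := by
  set c : H := (x k0)⁻¹ * y k0 with hc
  set y1 : H := y k1 - x k1 * c with hy1def
  have hxc : x k0 * c = y k0 := by
    rw [hc, mul_inv_cancel_left₀ hx0]
  have hy1 : y1 ≠ 0 := by
    intro h0
    apply hy c
    funext k
    rcases tri k0 k1 hk k with rfl | rfl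
    · simp [rsmul, hxc]
    · simp only [rsmul]
      have h5 : y k - x k * c = 0 := h0
      exact (eq_of_sub_eq_zero h5).symm ▸ rfl
  set a0 : H := (x k0)⁻¹ * u k0 with ha0
  set b : H := y1⁻¹ * (u k1 - x k1 * a0) with hb
  refine ⟨a0 - c * b, b, ?_⟩
  funext k
  rcases tri k0 k1 hk k with rfl | rfl
  · simp only [Pi.add_apply, rsmul]
    have hxa : x k * a0 = u k := by rw [ha0, mul_inv_cancel_left₀ hx0]
    calc u k = x k * a0 - (x k * c) * b + y k * b := by rw [hxa, hxc]; noncomm_ring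
    _ = x k * (a0 - c * b) + y k * b := by noncomm_ring
  · simp only [Pi.add_apply, rsmul]
    have hyb : y1 * b = u k - x k * a0 := by rw [hb, mul_inv_cancel_left₀ hy1]
    have h6 : y k * b = x k * (c * b) + (u k - x k * a0) := by
      rw [← hyb, hy1def]; noncomm_ring
    calc u k = x k * (a0 - c * b) + (x k * (c * b) + (u k - x k * a0)) := by noncomm_ring
    _ = x k * (a0 - c * b) + y k * b := by rw [← h6]

lemma exists_nonzero_coord (v : H2) (hv : v ≠ 0) : v 0 ≠ 0 ∨ v 1 ≠ 0 := by
  by_contra h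
  push_neg at h
  apply hv
  funext k
  rcases tri 0 1 (by decide) k with rfl | rfl
  · exact h.1
  · exact h.2

lemma eig_exists (S : H2 → H2) (hlin : RightLinear S) (hS : ∀ v, S (S v) = -v)
    (v : H2) (hv : v ≠ 0) : ∃ w : H2, w ≠ 0 ∧ S w = rsmul w qi := by
  obtain ⟨hadd, hsmul⟩ := hlin
  set w : H2 := v + rsmul (S v) (-qi) with hw
  have hSw : S w = rsmul w qi := by
    rw [hw, hadd, hsmul, hS]
    have h1 : rsmul (-v) (-qi) = rsmul v qi := by
      funext k; simp [rsmul]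
    rw [h1]
    have h2 : rsmul (v + rsmul (S v) (-qi)) qi
        = rsmul v qi + rsmul (S v) ((-qi) * qi) := by
      funext k; simp only [rsmul, Pi.add_apply]; noncomm_ring
    rw [h2, neg_qi_qi, rsmul_one]
    abel
  by_cases hw0 : w = 0
  · have hv' : v = rsmul (S v) qi := by
      funext k
      have := congrFun hw0 k
      simp only [hw, Pi.add_apply, Pi.zero_apply, rsmul, mul_neg] at this
      simp only [rsmul]
      refine eq_of_sub_eq_zero ?_
      rw [sub_eq_add_neg]
      exact this
    have hSv : S v = rsmul v (-qi) := by
      conv_rhs => rw [hv', rsmul_rsmul, qi_neg_qi, rsmul_one]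
    refine ⟨rsmul v qj, rsmul_ne_zero v hv qj qj_ne_zero, ?_⟩
    rw [hsmul, hSv, rsmul_rsmul, rsmul_rsmul, key_comm]
  · exact ⟨w, hw0, hSw⟩

theorem stmt0 (S : H2 → H2) (hlin : RightLinear S) (hS : ∀ v, S (S v) = -v) :
    (∀ v : H2, v ≠ 0 →
      lineOf v = lineOf (S v) ∨ (∀ u : H2, ∃ a b : H, u = rsmul v a + rsmul (S v) b)) ∧
    ∃ w : H2, w ≠ 0 ∧ S w = rsmul w (⟨0, 1, 0, 0⟩ : H) := by
  constructor
  · intro v hv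
    by_cases hline : ∃ q : H, S v = rsmul v q
    · left
      obtain ⟨q, hq⟩ := hline
      have hq0 : q ≠ 0 := by
        rintro rfl
        have h1 : S v = 0 := by
          rw [hq]; funext k; simp [rsmul]
        have h2 := hS v
        rw [h1] at h2
        have h3 : S (0 : H2) = 0 := by
          have := hlin.2 0 0
          have h4 : rsmul (0 : H2) (0 : H) = 0 := by funext k; simp [rsmul]
          rw [h4] at this
          rw [this]
          funext k; simp [rsmul]
        rw [h3] at h2
        exact hv (by rw [← neg_neg v, ← h2, neg_zero])
      ext u
      constructor
      · rintro ⟨a, rfl⟩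
        exact ⟨q⁻¹ * a, by rw [hq, rsmul_rsmul, mul_inv_cancel_left₀ hq0]⟩
      · rintro ⟨a, rfl⟩
        exact ⟨q * a, by rw [hq, rsmul_rsmul]⟩
    · right
      intro u
      push_neg at hline
      rcases exists_nonzero_coord v hv with h0 | h1
      · exact key_span 0 1 (by decide) v (S v) h0 hline u
      · exact key_span 1 0 (by decide) v (S v) h1 hline u
  · have hv : (fun _ => 1 : H2) ≠ 0 := by
      intro h
      have := congrFun h 0
      simp at this
    obtain ⟨w, hw0, hw⟩ := eig_exists S hlin hS _ hv
    exact ⟨w, hw0, by rw [hw]; rfl⟩
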